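/- Let F be a field, let φ be an automorphism of the additive group (F, +), and suppose there exists an automorphism θ of SL₂(F) with θ ∘ θ = id such that θ maps the upper unipotent matrix !![1, x; 0, 1] to the lower unipotent matrix !![1, 0; φ(x), 1] and maps !![1, 0; y, 1] to !![1, φ⁻¹(y); 0, 1], for all x, y ∈ F. Then there exist a ring automorphism σ of F with σ ∘ σ = id and an element ε ∈ F with ε ≠ 0 and σ(ε) = ε, such that φ(x) = ε·σ(x) for all x ∈ F. -/

import Mathlib

open Matrix

/-- Upper unipotent matrix as an element of `SL₂(F)`. -/
def flipAux_Mu {F : Type*} [Field F] (x : F) : SpecialLinearGroup (Fin 2) F :=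
  ⟨!![1,x;0,1], by simp [Matrix.det_fin_two_of]⟩

/-- Lower unipotent matrix as an element of `SL₂(F)`. -/
def flipAux_Ml {F : Type*} [Field F] (y : F) : SpecialLinearGroup (Fin 2) F :=
  ⟨!![1,0;y,1], by simp [Matrix.det_fin_two_of]⟩

/-- The braid relation in `SL₂(F)`. -/
lemma flipAux_braid {F : Type*} [Field F] (t : F) (ht : t ≠ 0) :
    flipAux_Mu t * flipAux_Ml (-t⁻¹) * flipAux_Mu t
      = flipAux_Ml (-t⁻¹) * flipAux_Mu t * flipAux_Ml (-t⁻¹) := by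
  apply Subtype.ext
  show ((flipAux_Mu t * flipAux_Ml (-t⁻¹) * flipAux_Mu t :
      SpecialLinearGroup (Fin 2) F) : Matrix (Fin 2) (Fin 2) F) = _
  have hmulv : ∀ A B : SpecialLinearGroup (Fin 2) F,
      (A * B : SpecialLinearGroup (Fin 2) F).val = A.val * B.val := fun _ _ => rfl
  rw [hmulv, hmulv, hmulv, hmulv]
  simp only [SpecialLinearGroup.coe_mul, flipAux_Mu, flipAux_Ml, Matrix.mul_fin_two]
  field_simp
  ext i j; fin_cases i <;> fin_cases j <;> simp <;> field_simp <;> ring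

/-- Nonvanishing in Hua's identity. -/
lemma flipAux_huaY {F : Type*} [Field F] (a c : F) (ha : a ≠ 0) (hc : c ≠ 0)
    (hac : a + c ≠ 0) : a⁻¹ + c⁻¹ ≠ 0 := by
  have h : a⁻¹ + c⁻¹ = (a + c) * (a⁻¹ * c⁻¹) := by
    field_simp
    ring
  rw [h]
  exact mul_ne_zero hac (mul_ne_zero (inv_ne_zero ha) (inv_ne_zero hc))

/-- Hua's identity for fields. -/
lemma flipAux_hua {F : Type*} [Field F] (a c : F) (ha : a ≠ 0) (hc : c ≠ 0)
    (hac : a + c ≠ 0) : a - (a⁻¹ + c⁻¹)⁻¹ = a * (a + c)⁻¹ * a := by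
  have hY := flipAux_huaY a c ha hc hac
  have h : (a⁻¹ + c⁻¹)⁻¹ = a * c * (a + c)⁻¹ := by
    apply inv_eq_of_mul_eq_one_right
    field_simp
    ring
  rw [h]
  field_simp
  ring

/-- If an additive automorphism `φ` of a field `F` induces an
involutory automorphism `θ` of `SL₂(F)` interchanging the upper and lower
unipotent subgroups as indicated, then `φ(x) = ε·σ(x)` for some field
automorphism `σ` of order dividing `2` and some `ε ∈ Fix_F(σ) \ {0}`. -/
theorem flip_of_SL2_comes_from_field_aut {F : Type*} [Field F]
    (φ : F ≃+ F)
    (θ : SpecialLinearGroup (Fin 2) F ≃* SpecialLinearGroup (Fin 2) F)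
    (hinv : ∀ g, θ (θ g) = g)
    (hup : ∀ (x : F) (u : SpecialLinearGroup (Fin 2) F),
      (u : Matrix (Fin 2) (Fin 2) F) = !![1, x; 0, 1] →
      (θ u : Matrix (Fin 2) (Fin 2) F) = !![1, 0; φ x, 1])
    (hlow : ∀ (y : F) (u : SpecialLinearGroup (Fin 2) F),
      (u : Matrix (Fin 2) (Fin 2) F) = !![1, 0; y, 1] →
      (θ u : Matrix (Fin 2) (Fin 2) F) = !![1, φ.symm y; 0, 1]) :
    ∃ σ : F ≃+* F, (∀ x, σ (σ x) = x) ∧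
      ∃ ε : F, ε ≠ 0 ∧ σ ε = ε ∧ ∀ x, φ x = ε * σ x := by
  have hφne : ∀ x : F, x ≠ 0 → φ x ≠ 0 := by
    intro x hx h
    exact hx (by simpa using congrArg φ.symm h)
  have hψne : ∀ x : F, x ≠ 0 → φ.symm x ≠ 0 := by
    intro x hx h
    exact hx (by simpa using congrArg φ h)
  -- Step 1: the key relation `φ t * φ.symm (-t⁻¹) = -1` for `t ≠ 0`.
  have key : ∀ t : F, t ≠ 0 → φ t * φ.symm (-t⁻¹) = -1 := by
    intro t ht
    have hb := congrArg θ (flipAux_braid t ht)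
    simp only [_root_.map_mul] at hb
    have hA : (θ (flipAux_Mu t) : Matrix (Fin 2) (Fin 2) F) = !![1, 0; φ t, 1] :=
      hup t (flipAux_Mu t) rfl
    have hB : (θ (flipAux_Ml (-t⁻¹)) : Matrix (Fin 2) (Fin 2) F)
        = !![1, φ.symm (-t⁻¹); 0, 1] := hlow (-t⁻¹) (flipAux_Ml (-t⁻¹)) rfl
    have hm : ((θ (flipAux_Mu t) * θ (flipAux_Ml (-t⁻¹)) * θ (flipAux_Mu t) :
        SpecialLinearGroup (Fin 2) F) : Matrix (Fin 2) (Fin 2) F)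
        = ((θ (flipAux_Ml (-t⁻¹)) * θ (flipAux_Mu t) * θ (flipAux_Ml (-t⁻¹)) :
        SpecialLinearGroup (Fin 2) F) : Matrix (Fin 2) (Fin 2) F) := by rw [hb]
    have hmulv : ∀ A B : SpecialLinearGroup (Fin 2) F,
        (A * B : SpecialLinearGroup (Fin 2) F).val = A.val * B.val := fun _ _ => rfl
    simp only [hmulv, SpecialLinearGroup.coe_mul, hA, hB, Matrix.mul_fin_two] at hm
    have h01 := congrFun (congrFun hm 0) 1
    simp only [Matrix.of_apply, Matrix.cons_val', Matrix.cons_val_zero, Matrix.cons_val_one,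
      Matrix.head_cons, Matrix.empty_val', Matrix.cons_val_fin_one, Matrix.head_fin_const] at h01
    have hbne : φ.symm (-t⁻¹) ≠ 0 := hψne _ (by simp [ht])
    exact mul_left_cancel₀ hbne (by linear_combination -h01)
  -- Step 2: inversion formulas.
  have inv1 : ∀ t : F, t ≠ 0 → φ.symm t⁻¹ = (φ t)⁻¹ := by
    intro t ht
    have h := key t ht
    rw [map_neg] at h
    have h2 : φ t * φ.symm t⁻¹ = 1 := by linear_combination -h
    field_simp [hφne t ht] at h2 ⊢
    linear_combination h2
  have inv2 : ∀ t : F, t ≠ 0 → φ t⁻¹ = (φ.symm t)⁻¹ := by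
    intro t ht
    have hs : φ.symm t ≠ 0 := hψne t ht
    have h := inv1 (φ.symm t) hs
    rw [AddEquiv.apply_symm_apply] at h
    have h2 := congrArg φ h
    rw [AddEquiv.apply_symm_apply] at h2
    rw [← h2]
  -- Step 3: Hua-type identity for φ.
  have hJ : ∀ a b : F, φ (a * b * a) = φ a * φ.symm b * φ a := by
    intro a b
    by_cases ha : a = 0
    · simp [ha]
    by_cases hb : b = 0
    · simp [hb]
    by_cases hba : b = a⁻¹
    · subst hba
      have h1 : a * a⁻¹ * a = a := by field_simp
      rw [h1, inv1 a ha]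
      field_simp [hφne a ha]
    · have hc : b⁻¹ - a ≠ 0 := by
        rw [sub_ne_zero]
        intro h
        exact hba (by rw [← h, inv_inv])
      have hac : a + (b⁻¹ - a) ≠ 0 := by
        have : a + (b⁻¹ - a) = b⁻¹ := by ring
        rw [this]
        exact inv_ne_zero hb
      have hY := flipAux_huaY a (b⁻¹ - a) ha hc hac
      have e1 : a * b * a = a - (a⁻¹ + (b⁻¹ - a)⁻¹)⁻¹ := by
        have h := flipAux_hua a (b⁻¹ - a) ha hc hac
        have h2 : a + (b⁻¹ - a) = b⁻¹ := by ring
        rw [h2, inv_inv] at h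
        exact h.symm
      rw [e1, map_sub, inv2 _ hY, map_add, inv1 a ha, inv1 _ hc, map_sub, inv2 b hb]
      -- now apply Hua's identity on the image side
      have hA' : φ a ≠ 0 := hφne a ha
      have hB' : φ.symm b ≠ 0 := hψne b hb
      have hC : (φ.symm b)⁻¹ - φ a ≠ 0 := by
        rw [← inv2 b hb, ← map_sub]
        exact hφne _ hc
      have hAC : φ a + ((φ.symm b)⁻¹ - φ a) ≠ 0 := by
        have : φ a + ((φ.symm b)⁻¹ - φ a) = (φ.symm b)⁻¹ := by ring
        rw [this]
        exact inv_ne_zero hB'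
      have h := flipAux_hua (φ a) ((φ.symm b)⁻¹ - φ a) hA' hC hAC
      have h2 : φ a + ((φ.symm b)⁻¹ - φ a) = (φ.symm b)⁻¹ := by ring
      rw [h2, inv_inv] at h
      exact h
  -- Step 4: the constant ε.
  set ε : F := φ 1 with hεdef
  have hε : ε ≠ 0 := hφne 1 one_ne_zero
  have hpsi : ∀ b : F, φ b = ε * φ.symm b * ε := by
    intro b
    have h := hJ 1 b
    simpa using h
  -- Step 5: the candidate field automorphism.
  set S : F → F := fun x => ε⁻¹ * φ x with hSdef
  have hS : ∀ x, S x = ε⁻¹ * φ x := fun x => rfl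
  have hφS : ∀ x, φ x = ε * S x := by
    intro x
    rw [hS, ← mul_assoc, mul_inv_cancel₀ hε, one_mul]
  have hSadd : ∀ x y, S (x + y) = S x + S y := by
    intro x y
    simp only [hS, map_add, mul_add]
  have hS1 : S 1 = 1 := by
    rw [hS, ← hεdef, inv_mul_cancel₀ hε]
  have hψS : ∀ b : F, φ.symm b = ε⁻¹ * S b := by
    intro b
    have h1 := hpsi b
    rw [hS]
    field_simp
    linear_combination -h1
  have hJS : ∀ a b : F, S (a * b * a) = S a * S b * S a := by
    intro a b
    have h1 := hJ a b
    rw [hψS b] at h1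
    simp only [hS]
    rw [h1]
    ring
  have hSsq : ∀ a : F, S (a * a) = S a * S a := by
    intro a
    have h := hJS a 1
    rw [hS1] at h
    rw [show a * 1 * a = a * a by ring] at h
    rw [h]
    ring
  have h2 : ∀ a b : F, S (a * b) + S (a * b) = S a * S b + S a * S b := by
    intro a b
    have e1 : (a + b) * (a + b) = a * a + (a * b + a * b) + b * b := by ring
    have e2 := hSsq (a + b)
    rw [e1] at e2
    simp only [hSadd] at e2
    rw [hSsq a, hSsq b] at e2
    linear_combination e2
  have hsq4 : ∀ a b : F, S (a * b) * S (a * b) = (S a * S b) * (S a * S b) := by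
    intro a b
    have e1 : (a * b) * (a * b) = a * (b * b) * a := by ring
    have e2 := hSsq (a * b)
    rw [e1, hJS a (b * b), hSsq b] at e2
    linear_combination -e2
  have hSmul : ∀ a b : F, S (a * b) = S a * S b := by
    intro a b
    have hd : (S (a * b) - S a * S b) * (S (a * b) - S a * S b) = 0 := by
      linear_combination hsq4 a b - (S a * S b) * (h2 a b)
    have h := mul_self_eq_zero.mp hd
    linear_combination h
  have hSleft : ∀ x, φ.symm (ε * S x) = x := by
    intro x
    rw [hS, ← mul_assoc, mul_inv_cancel₀ hε, one_mul]
    exact φ.symm_apply_apply x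
  have hSright : ∀ y, S (φ.symm (ε * y)) = y := by
    intro y
    rw [hS, φ.apply_symm_apply, ← mul_assoc, inv_mul_cancel₀ hε, one_mul]
  -- Key involution facts
  have hkey : ∀ b : F, b = ε * S ε⁻¹ * S (S b) := by
    intro b
    have h1 : φ (φ.symm b) = b := φ.apply_symm_apply b
    rw [hψS b, hφS (ε⁻¹ * S b), hSmul ε⁻¹ (S b)] at h1
    linear_combination -h1
  have hεinv : ε * S ε⁻¹ = 1 := by
    have h := hkey 1
    rw [hS1, hS1] at h
    linear_combination -h
  have hSS : ∀ b : F, S (S b) = b := by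
    intro b
    have h := hkey b
    rw [hεinv] at h
    linear_combination -h
  have hSεinv : S ε⁻¹ = ε⁻¹ := by
    have h : ε * S ε⁻¹ = ε * ε⁻¹ := by
      rw [hεinv, mul_inv_cancel₀ hε]
    exact mul_left_cancel₀ hε h
  have hSε : S ε = ε := by
    have h := hSmul ε ε⁻¹
    rw [mul_inv_cancel₀ hε, hS1, hSεinv] at h
    have h2 : S ε * ε⁻¹ * ε = 1 * ε := by rw [← h]
    rw [mul_assoc, inv_mul_cancel₀ hε, mul_one, one_mul] at h2
    exact h2
  refine ⟨{ toFun := S, invFun := fun y => φ.symm (ε * y), left_inv := hSleft,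
            right_inv := hSright, map_mul' := hSmul, map_add' := hSadd }, hSS, ε, hε, hSε, hφS⟩
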